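/- arXiv:0802.1380 — 3 statements merged into one kernel-verified Lean document; each statement's English description precedes it below -/
import Mathlib

section
/- Let (A_n)_{n≥1} be a sequence of subsets of ℝ² such that (i) every A_n contains the origin (0,0), (ii) the sequence is bounded, i.e. there is a constant C such that ‖a‖ ≤ C for every n and every a ∈ A_n, and (iii) the sequence (n·A_n) is sup-additive, meaning that for all n ≥ 1 and all N > n one has n·A_n + (N−n)·A_{N−n} ⊆ N·A_N (Minkowski sum and scalar dilation). Then the sequence (A_n) converges and its limit equals the closure of ⋃_{n≥1} A_n; that is, liminf A_n = limsup A_n = cl(⋃_{n≥1} A_n). -/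
open Pointwise Filter

/-- `liminf` of a sequence of subsets of `ℝ²` (indexed by `n ≥ 1`): the set of points `a`
for which there exist points `x n ∈ A n` (for all `n ≥ 1`) with `x n → a`. -/
def setLimInf (A : ℕ → Set (ℝ × ℝ)) : Set (ℝ × ℝ) :=
  {a | ∃ x : ℕ → ℝ × ℝ, (∀ n, 1 ≤ n → x n ∈ A n) ∧ Tendsto x atTop (nhds a)}

/-- `limsup` of a sequence of subsets of `ℝ²` (indexed by `n ≥ 1`): the set of points `a`
for which there exist a strictly increasing sequence of indices `φ k ≥ 1` and points
`x k ∈ A (φ k)` with `x k → a`. -/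
def setLimSup (A : ℕ → Set (ℝ × ℝ)) : Set (ℝ × ℝ) :=
  {a | ∃ φ : ℕ → ℕ, StrictMono φ ∧ (∀ k, 1 ≤ φ k) ∧
    ∃ x : ℕ → ℝ × ℝ, (∀ k, x k ∈ A (φ k)) ∧ Tendsto x atTop (nhds a)}

private lemma lem_mul (A : ℕ → Set (ℝ × ℝ))
    (hsup : ∀ n N : ℕ, 1 ≤ n → n < N →
      (n : ℝ) • A n + ((N - n : ℕ) : ℝ) • A (N - n) ⊆ (N : ℝ) • A N)
    {m : ℕ} (hm : 1 ≤ m) {a : ℝ × ℝ} (ha : a ∈ A m) :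
    ∀ q, 1 ≤ q → a ∈ A (q * m) := by
  intro q hq
  induction q with
  | zero => omega
  | succ q ih =>
    rcases Nat.eq_zero_or_pos q with h | h
    · subst h; simpa using ha
    · have ihm : a ∈ A (q * m) := ih h
      have h1 : m ≤ q * m := Nat.le_mul_of_pos_left m h
      have hsm : (q + 1) * m = q * m + m := Nat.succ_mul q m
      have hlt : m < (q + 1) * m := by omega
      have hsub : (q + 1) * m - m = q * m := by omega
      have key := hsup m ((q + 1) * m) hm hlt
      rw [hsub] at key
      have hmem : (m : ℝ) • a + ((q * m : ℕ) : ℝ) • a ∈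
          (m : ℝ) • A m + ((q * m : ℕ) : ℝ) • A (q * m) :=
        Set.add_mem_add (Set.smul_mem_smul_set ha) (Set.smul_mem_smul_set ihm)
      have h2 := key hmem
      have heq : (m : ℝ) • a + ((q * m : ℕ) : ℝ) • a = (((q + 1) * m : ℕ) : ℝ) • a := by
        rw [← add_smul]; congr 1; push_cast; ring
      rw [heq] at h2
      have hne : (((q + 1) * m : ℕ) : ℝ) ≠ 0 :=
        Nat.cast_ne_zero.mpr (Nat.mul_ne_zero (by omega) (by omega))
      rw [Set.mem_smul_set_iff_inv_smul_mem₀ hne, inv_smul_smul₀ hne] at h2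
      exact h2

private lemma lem_approx (A : ℕ → Set (ℝ × ℝ)) (C : ℝ)
    (h0 : ∀ n, 1 ≤ n → ((0, 0) : ℝ × ℝ) ∈ A n)
    (hC : ∀ n, 1 ≤ n → ∀ a ∈ A n, ‖a‖ ≤ C)
    (hsup : ∀ n N : ℕ, 1 ≤ n → n < N →
      (n : ℝ) • A n + ((N - n : ℕ) : ℝ) • A (N - n) ⊆ (N : ℝ) • A N)
    {m N : ℕ} (hm : 1 ≤ m) (hmN : m ≤ N) {a : ℝ × ℝ} (ha : a ∈ A m) :
    ∃ x ∈ A N, dist x a ≤ (m : ℝ) * C / N := by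
  have hC0 : 0 ≤ C := le_trans (norm_nonneg a) (hC m hm a ha)
  have hN1 : 1 ≤ N := le_trans hm hmN
  have hNpos : (0 : ℝ) < N := by exact_mod_cast hN1
  set q := N / m with hqdef
  set r := N % m with hrdef
  have hq1 : 1 ≤ q := (Nat.one_le_div_iff (by omega)).mpr hmN
  have hrm : r < m := Nat.mod_lt _ (by omega)
  have hqmr : m * q + r = N := Nat.div_add_mod N m
  have haq : a ∈ A (q * m) := lem_mul A hsup hm ha q hq1
  rcases Nat.eq_zero_or_pos r with hr0 | hrpos
  · have hqm : q * m = N := by rw [mul_comm]; omega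
    refine ⟨a, hqm ▸ haq, ?_⟩
    rw [dist_self]
    positivity
  · have hqm1 : 1 ≤ q * m := Nat.one_le_iff_ne_zero.mpr (by
      intro h; rcases Nat.mul_eq_zero.mp h with h | h <;> omega)
    have hlt : q * m < N := by rw [mul_comm]; omega
    have hsub : N - q * m = r := by rw [mul_comm]; omega
    have key := hsup (q * m) N hqm1 hlt
    rw [hsub] at key
    have hmem : ((q * m : ℕ) : ℝ) • a + ((r : ℕ) : ℝ) • ((0, 0) : ℝ × ℝ) ∈
        ((q * m : ℕ) : ℝ) • A (q * m) + ((r : ℕ) : ℝ) • A r :=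
      Set.add_mem_add (Set.smul_mem_smul_set haq) (Set.smul_mem_smul_set (h0 r hrpos))
    have h2 := key hmem
    have hzero : ((r : ℕ) : ℝ) • ((0, 0) : ℝ × ℝ) = 0 := by
      simp [Prod.smul_mk]
    rw [hzero, add_zero] at h2
    have hNne : ((N : ℕ) : ℝ) ≠ 0 := ne_of_gt hNpos
    rw [Set.mem_smul_set_iff_inv_smul_mem₀ hNne, smul_smul] at h2
    refine ⟨_, h2, ?_⟩
    have hcast : ((q * m : ℕ) : ℝ) = (N : ℝ) - (r : ℝ) := by
      have : ((m * q + r : ℕ) : ℝ) = (N : ℝ) := Nat.cast_inj.mpr hqmr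
      push_cast at this ⊢
      linarith
    rw [dist_eq_norm]
    have hd : ((N : ℝ)⁻¹ * ((q * m : ℕ) : ℝ)) • a - a
        = ((N : ℝ)⁻¹ * ((q * m : ℕ) : ℝ) - 1) • a := by
      rw [sub_smul, one_smul]
    rw [hd, norm_smul, Real.norm_eq_abs]
    have habs : (N : ℝ)⁻¹ * ((q * m : ℕ) : ℝ) - 1 = -((r : ℝ) / N) := by
      rw [hcast]; field_simp; ring
    rw [habs, abs_neg, abs_div, abs_of_nonneg (by positivity : (0:ℝ) ≤ (r:ℝ)),
      abs_of_pos hNpos, div_mul_eq_mul_div]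
    gcongr ?_ * ?_ / _
    · exact_mod_cast hrm.le
    · exact hC m hm a ha

/-- If `(A_n)_{n ≥ 1}` is a bounded sequence of subsets of `ℝ²` containing the origin such that
`(n • A_n)` is sup-additive (`n • A_n + (N - n) • A_{N-n} ⊆ N • A_N` for `1 ≤ n < N`), then the
sequence converges and its limit is the closure of `⋃_{n ≥ 1} A_n`. -/
theorem supAdditive_regions_converge_to_union (A : ℕ → Set (ℝ × ℝ))
    (h0 : ∀ n, 1 ≤ n → ((0, 0) : ℝ × ℝ) ∈ A n)
    (hbd : ∃ C : ℝ, ∀ n, 1 ≤ n → ∀ a ∈ A n, ‖a‖ ≤ C)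
    (hsup : ∀ n N : ℕ, 1 ≤ n → n < N →
      (n : ℝ) • A n + ((N - n : ℕ) : ℝ) • A (N - n) ⊆ (N : ℝ) • A N) :
    setLimInf A = closure (⋃ n, ⋃ (_ : 1 ≤ n), A n) ∧
    setLimSup A = closure (⋃ n, ⋃ (_ : 1 ≤ n), A n) := by
  obtain ⟨C, hC⟩ := hbd
  set U := ⋃ n, ⋃ (_ : 1 ≤ n), A n with hU
  have hinf_sub : setLimInf A ⊆ closure U := by
    rintro a ⟨x, hx, hxa⟩
    refine mem_closure_of_tendsto hxa ?_
    filter_upwards [eventually_ge_atTop 1] with n hn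
    exact Set.mem_iUnion.mpr ⟨n, Set.mem_iUnion.mpr ⟨hn, hx n hn⟩⟩
  have hsup_sub : setLimSup A ⊆ closure U := by
    rintro a ⟨φ, hφ, hφ1, x, hx, hxa⟩
    refine mem_closure_of_tendsto hxa ?_
    filter_upwards with k
    exact Set.mem_iUnion.mpr ⟨φ k, Set.mem_iUnion.mpr ⟨hφ1 k, hx k⟩⟩
  have hinf_le_sup : setLimInf A ⊆ setLimSup A := by
    rintro a ⟨x, hx, hxa⟩
    exact ⟨fun k => k + 1, fun i j h => Nat.add_lt_add_right h 1, fun k => Nat.le_add_left 1 k,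
      fun k => x (k + 1), fun k => hx _ (Nat.le_add_left 1 k),
      hxa.comp (tendsto_add_atTop_nat 1)⟩
  have hcl_sub : closure U ⊆ setLimInf A := by
    intro a ha
    have hinfd : ∀ ε > (0 : ℝ), ∃ M : ℕ, ∀ N ≥ M, Metric.infDist a (A N) < ε := by
      intro ε hε
      obtain ⟨b, hbU, hab⟩ := Metric.mem_closure_iff.mp ha (ε / 2) (by positivity)
      obtain ⟨m, hm, hbm⟩ : ∃ m, 1 ≤ m ∧ b ∈ A m := by
        rw [hU] at hbU
        simpa [Set.mem_iUnion] using hbU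
      obtain ⟨M2, hM2⟩ := exists_nat_gt (2 * ((m : ℝ) * C) / ε)
      refine ⟨max m (M2 + 1), fun N hN => ?_⟩
      have hmN : m ≤ N := le_trans (le_max_left _ _) hN
      have hM2N : M2 + 1 ≤ N := le_trans (le_max_right _ _) hN
      obtain ⟨x, hxA, hxd⟩ := lem_approx A C h0 hC hsup hm hmN hbm
      have hNpos : (0 : ℝ) < N := by exact_mod_cast lt_of_lt_of_le (Nat.succ_pos 0) (le_trans hm hmN)
      have hNM : 2 * ((m : ℝ) * C) / ε < N := by
        calc 2 * ((m : ℝ) * C) / ε < M2 := hM2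
          _ ≤ N := by exact_mod_cast le_trans (Nat.le_succ M2) hM2N
      have h1 : (m : ℝ) * C / N < ε / 2 := by
        rw [div_lt_div_iff₀ hNpos two_pos]
        rw [div_lt_iff₀ hε] at hNM
        nlinarith
      calc Metric.infDist a (A N) ≤ dist a x := Metric.infDist_le_dist_of_mem hxA
        _ ≤ dist a b + dist b x := dist_triangle a b x
        _ = dist a b + dist x b := by rw [dist_comm b x]
        _ < ε / 2 + ε / 2 := add_lt_add hab (hxd.trans_lt h1)
        _ = ε := by ring
    have hne : ∀ N, 1 ≤ N → ∃ y, y ∈ A N ∧ dist a y < Metric.infDist a (A N) + 1 / (N + 1) := by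
      intro N hN
      have hNE : (A N).Nonempty := ⟨_, h0 N hN⟩
      have hlt : Metric.infDist a (A N) < Metric.infDist a (A N) + 1 / (N + 1) := by
        have : (0 : ℝ) < 1 / ((N : ℝ) + 1) := by positivity
        linarith
      exact (Metric.infDist_lt_iff hNE).mp hlt
    choose! y hyA hyd using hne
    refine ⟨y, hyA, ?_⟩
    rw [Metric.tendsto_atTop]
    intro ε hε
    obtain ⟨M1, hM1⟩ := hinfd (ε / 2) (by positivity)
    obtain ⟨M3, hM3⟩ := exists_nat_gt (2 / ε)
    refine ⟨max (max M1 M3) 1, fun N hN => ?_⟩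
    have hN1 : 1 ≤ N := le_trans (le_max_right _ _) hN
    have hNM1 : M1 ≤ N := le_trans (le_trans (le_max_left _ _) (le_max_left _ _)) hN
    have hNM3 : M3 ≤ N := le_trans (le_trans (le_max_right _ _) (le_max_left _ _)) hN
    have hfr : 1 / ((N : ℝ) + 1) < ε / 2 := by
      have hN3 : (2 / ε : ℝ) < (N : ℝ) + 1 := by
        calc (2 / ε : ℝ) < M3 := hM3
          _ ≤ N := by exact_mod_cast hNM3
          _ < N + 1 := by linarith
      rw [div_lt_div_iff₀ (by positivity) two_pos]
      rw [div_lt_iff₀ hε] at hN3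
      nlinarith
    calc dist (y N) a = dist a (y N) := dist_comm _ _
      _ < Metric.infDist a (A N) + 1 / (N + 1) := hyd N hN1
      _ < ε / 2 + ε / 2 := add_lt_add (hM1 N hNM1) hfr
      _ = ε := by ring
  refine ⟨Set.Subset.antisymm hinf_sub hcl_sub, Set.Subset.antisymm hsup_sub (hcl_sub.trans hinf_le_sup)⟩
end

section
/- Let (A_n)_{n≥1} be a sequence of convex, closed and bounded subsets of ℝ² such that the sequence (n·A_n) is sub-additive, meaning that for all n ≥ 1 and all N > n one has N·A_N ⊆ n·A_n + (N−n)·A_{N−n} (Minkowski sum and scalar dilation). Then the sequence (A_n) converges and its limit equals the closure of ⋂_{n≥1} A_n; that is, liminf A_n = limsup A_n = cl(⋂_{n≥1} A_n). -/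
open Pointwise Filter

private lemma smul_set_cancel' {c : ℝ} (hc : c ≠ 0) {s t : Set (ℝ × ℝ)}
    (h : c • s ⊆ c • t) : s ⊆ t := by
  intro x hx
  obtain ⟨y, hy, hxy⟩ := h (Set.smul_mem_smul_set hx)
  exact (smul_right_injective (ℝ × ℝ) hc hxy) ▸ hy

private lemma A_mul_subset (A : ℕ → Set (ℝ × ℝ))
    (hconv : ∀ n, 1 ≤ n → Convex ℝ (A n))
    (hsub : ∀ n N : ℕ, 1 ≤ n → n < N →
      (N : ℝ) • A N ⊆ (n : ℝ) • A n + ((N - n : ℕ) : ℝ) • A (N - n))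
    (m : ℕ) (hm : 1 ≤ m) :
    ∀ q, 1 ≤ q → A (q * m) ⊆ A m := by
  intro q
  induction q with
  | zero => omega
  | succ q ih =>
    intro _
    rcases Nat.eq_zero_or_pos q with hq0 | hq1
    · subst hq0; simp
    have h1 : 1 ≤ q * m := Nat.mul_pos hq1 hm
    have h2 : q * m < (q + 1) * m := by
      have := add_one_mul q m; omega
    have hdiff : (q + 1) * m - q * m = m := by
      have := add_one_mul q m; omega
    have hstep := hsub (q * m) ((q + 1) * m) h1 h2
    rw [hdiff] at hstep
    have hstep2 : ((((q + 1) * m : ℕ)) : ℝ) • A ((q + 1) * m) ⊆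
        ((q * m : ℕ) : ℝ) • A m + (m : ℝ) • A m :=
      hstep.trans (Set.add_subset_add (Set.smul_set_mono (ih hq1)) subset_rfl)
    have hcomb : ((q * m : ℕ) : ℝ) • A m + (m : ℝ) • A m = (((q + 1) * m : ℕ) : ℝ) • A m := by
      rw [← (hconv m hm).add_smul (by positivity) (by positivity)]
      push_cast
      ring_nf
    rw [hcomb] at hstep2
    have hne : ((((q + 1) * m : ℕ)) : ℝ) ≠ 0 := by positivity
    exact smul_set_cancel' hne hstep2

private lemma empty_propagates (A : ℕ → Set (ℝ × ℝ))
    (hsub : ∀ n N : ℕ, 1 ≤ n → n < N →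
      (N : ℝ) • A N ⊆ (n : ℝ) • A n + ((N - n : ℕ) : ℝ) • A (N - n))
    {j N : ℕ} (hj : 1 ≤ j) (hjN : j < N) (hAj : A j = ∅) : A N = ∅ := by
  by_contra h
  obtain ⟨x, hx⟩ := Set.nonempty_iff_ne_empty.mpr h
  have hmem := hsub j N hj hjN (Set.smul_mem_smul_set hx)
  rw [hAj] at hmem
  simp at hmem

private lemma approx_lemma (A : ℕ → Set (ℝ × ℝ))
    (hconv : ∀ n, 1 ≤ n → Convex ℝ (A n))
    (hsub : ∀ n N : ℕ, 1 ≤ n → n < N →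
      (N : ℝ) • A N ⊆ (n : ℝ) • A n + ((N - n : ℕ) : ℝ) • A (N - n))
    (m : ℕ) (hm : 1 ≤ m) (R : ℝ)
    (hR : ∀ n, 1 ≤ n → n ≤ m → ∀ x ∈ A n, ‖x‖ ≤ R)
    (N : ℕ) (hN : m ≤ N) (x : ℝ × ℝ) (hx : x ∈ A N) :
    ∃ u ∈ A m, dist x u ≤ 2 * R * m / N := by
  have hm0 : 0 < m := hm
  have hN0 : 0 < N := lt_of_lt_of_le hm0 hN
  have hNR : (0 : ℝ) < N := by exact_mod_cast hN0
  have hq1 : 1 ≤ N / m := (Nat.one_le_div_iff hm0).mpr hN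
  have hqm : m * (N / m) + N % m = N := Nat.div_add_mod N m
  rcases Nat.eq_zero_or_pos (N % m) with hr0 | hr1
  · have hNe : N = m * (N / m) := by omega
    have hxq : x ∈ A ((N / m) * m) := by rwa [mul_comm (N / m) m, ← hNe]
    have hxm : x ∈ A m := A_mul_subset A hconv hsub m hm (N / m) hq1 hxq
    have hR0 : 0 ≤ R := (norm_nonneg x).trans (hR m hm le_rfl x hxm)
    exact ⟨x, hxm, by simp [dist_self]; positivity⟩
  · set Q := m * (N / m) with hQdef
    have hQ1 : 1 ≤ Q := Nat.mul_pos hm0 hq1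
    have hQN : Q < N := by omega
    have hNQ : N - Q = N % m := by omega
    have hstep := hsub Q N hQ1 hQN
    rw [hNQ] at hstep
    have hmem := hstep (Set.smul_mem_smul_set hx)
    obtain ⟨u0, hu0, v0, hv0, heq⟩ := hmem
    obtain ⟨u, hu, rfl⟩ := hu0
    obtain ⟨v, hv, rfl⟩ := hv0
    have hu' : u ∈ A m := by
      refine A_mul_subset A hconv hsub m hm (N / m) hq1 ?_
      rwa [mul_comm (N / m) m, ← hQdef]
    have hrm : N % m < m := Nat.mod_lt N hm0
    have hnu : ‖u‖ ≤ R := hR m hm le_rfl u hu'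
    have hnv : ‖v‖ ≤ R := hR (N % m) hr1 (le_of_lt hrm) v hv
    have hR0 : 0 ≤ R := (norm_nonneg u).trans hnu
    have hNc : ((Q : ℝ) + (N % m : ℕ)) = (N : ℝ) := by exact_mod_cast hqm
    have h1 : ((Q : ℝ) + (N % m : ℕ)) • (x - u) = ((N % m : ℕ) : ℝ) • (v - u) := by
      have heq' : ((Q : ℝ) + (N % m : ℕ)) • x = (Q : ℝ) • u + ((N % m : ℕ) : ℝ) • v := by
        rw [hNc]; exact heq.symm
      rw [smul_sub, heq', add_smul, smul_sub]
      abel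
    rw [hNc] at h1
    have h2 : x - u = (((N % m : ℕ) : ℝ) / N) • (v - u) := by
      have h3 : x - u = (N : ℝ)⁻¹ • (((N % m : ℕ) : ℝ) • (v - u)) := by
        rw [← h1, inv_smul_smul₀ (ne_of_gt hNR)]
      rw [h3, smul_smul, div_eq_inv_mul]
    refine ⟨u, hu', ?_⟩
    rw [dist_eq_norm, h2, norm_smul, Real.norm_eq_abs,
        abs_of_nonneg (by positivity)]
    have h3 : ‖v - u‖ ≤ 2 * R := (norm_sub_le v u).trans (by linarith)
    have h4 : ((N % m : ℕ) : ℝ) ≤ (m : ℝ) := by exact_mod_cast le_of_lt hrm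
    rw [div_mul_eq_mul_div]
    gcongr ?_ / _
    nlinarith [norm_nonneg (v - u), show (0:ℝ) ≤ ((N % m : ℕ) : ℝ) by positivity]

/-- If `(A_n)_{n ≥ 1}` is a sequence of convex, closed and bounded subsets of `ℝ²` such that
`(n • A_n)` is sub-additive (`N • A_N ⊆ n • A_n + (N - n) • A_{N-n}` for `1 ≤ n < N`), then the
sequence converges and its limit is the closure of `⋂_{n ≥ 1} A_n`. -/
theorem subAdditive_regions_converge_to_intersection (A : ℕ → Set (ℝ × ℝ))
    (hconv : ∀ n, 1 ≤ n → Convex ℝ (A n))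
    (hclosed : ∀ n, 1 ≤ n → IsClosed (A n))
    (hbd : ∀ n, 1 ≤ n → Bornology.IsBounded (A n))
    (hsub : ∀ n N : ℕ, 1 ≤ n → n < N →
      (N : ℝ) • A N ⊆ (n : ℝ) • A n + ((N - n : ℕ) : ℝ) • A (N - n)) :
    setLimInf A = closure (⋂ n, ⋂ (_ : 1 ≤ n), A n) ∧
    setLimSup A = closure (⋂ n, ⋂ (_ : 1 ≤ n), A n) := by
  have hBclosed : IsClosed (⋂ n, ⋂ (_ : 1 ≤ n), A n) :=
    isClosed_iInter fun n => isClosed_iInter fun hn => hclosed n hn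
  have hsub1 : (⋂ n, ⋂ (_ : 1 ≤ n), A n) ⊆ setLimInf A := by
    intro a ha
    exact ⟨fun _ => a, fun n hn => Set.mem_iInter₂.mp ha n hn, tendsto_const_nhds⟩
  have hsub2 : setLimInf A ⊆ setLimSup A := by
    rintro a ⟨x, hx, hlim⟩
    exact ⟨fun k => k + 1, strictMono_id.add_const 1, fun k => Nat.le_add_left 1 k,
      fun k => x (k + 1), fun k => hx (k + 1) (by omega),
      hlim.comp (tendsto_add_atTop_nat 1)⟩
  have hsub3 : setLimSup A ⊆ (⋂ n, ⋂ (_ : 1 ≤ n), A n) := by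
    rintro a ⟨φ, hφ, hφ1, x, hx, hlim⟩
    refine Set.mem_iInter₂.mpr fun m hm => ?_
    by_cases hAm : (A m).Nonempty
    · -- main case: use the approximation lemma
      have hbdd : Bornology.IsBounded (⋃ n ∈ Set.Icc 1 m, A n) :=
        (Bornology.isBounded_biUnion (Set.finite_Icc 1 m)).mpr fun n hn => hbd n hn.1
      obtain ⟨R, hR⟩ := isBounded_iff_forall_norm_le.mp hbdd
      have hR' : ∀ n, 1 ≤ n → n ≤ m → ∀ y ∈ A n, ‖y‖ ≤ R := fun n h1 h2 y hy =>
        hR y (Set.mem_biUnion ⟨h1, h2⟩ hy)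
      have key : ∀ k, m ≤ φ k → Metric.infDist (x k) (A m) ≤ 2 * R * m / (φ k) := by
        intro k hk
        obtain ⟨u, hu, hdu⟩ := approx_lemma A hconv hsub m hm R hR' (φ k) hk (x k) (hx k)
        exact (Metric.infDist_le_dist_of_mem hu).trans hdu
      have hφtop : Tendsto (fun k => ((φ k : ℕ) : ℝ)) atTop atTop :=
        tendsto_natCast_atTop_atTop.comp hφ.tendsto_atTop
      have hlim1 : Tendsto (fun k => 2 * R * m / (φ k : ℝ)) atTop (nhds 0) :=
        tendsto_const_nhds.div_atTop hφtop
      have hlim2 : Tendsto (fun k => dist a (x k)) atTop (nhds 0) := by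
        simpa [dist_comm] using tendsto_iff_dist_tendsto_zero.mp hlim
      have hlimsum : Tendsto (fun k => 2 * R * m / (φ k : ℝ) + dist a (x k))
          atTop (nhds 0) := by
        simpa using hlim1.add hlim2
      have hev : ∀ᶠ k in atTop, Metric.infDist a (A m) ≤
          2 * R * m / (φ k : ℝ) + dist a (x k) := by
        filter_upwards [eventually_ge_atTop m] with k hk
        have hkm : m ≤ φ k := hk.trans hφ.le_apply
        calc Metric.infDist a (A m) ≤ Metric.infDist (x k) (A m) + dist a (x k) :=
              Metric.infDist_le_infDist_add_dist
          _ ≤ 2 * R * m / (φ k : ℝ) + dist a (x k) := by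
              have := key k hkm; linarith
      have hle : Metric.infDist a (A m) ≤ 0 := ge_of_tendsto hlimsum hev
      have h0 : Metric.infDist a (A m) = 0 :=
        le_antisymm hle Metric.infDist_nonneg
      exact ((hclosed m hm).mem_iff_infDist_zero hAm).mpr h0
    · -- A m is empty; but then A (φ (m+1)) is empty, contradicting x (m+1) ∈ A (φ (m+1))
      have hAm' : A m = ∅ := Set.not_nonempty_iff_eq_empty.mp hAm
      have hlt : m < φ (m + 1) := lt_of_lt_of_le (Nat.lt_succ_self m) hφ.le_apply
      have hempty : A (φ (m + 1)) = ∅ := empty_propagates A hsub hm hlt hAm'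
      exact absurd (hx (m + 1)) (by simp [hempty])
  rw [hBclosed.closure_eq]
  exact ⟨subset_antisymm (hsub2.trans hsub3) hsub1, subset_antisymm hsub3 (hsub1.trans hsub2)⟩
end

section
/- Let N ≥ 1, let 𝒳₁, 𝒳₂, 𝒴, 𝒮 be finite nonempty sets, and let X₁ = (X_{1,1},…,X_{1,N}), X₂ = (X_{2,1},…,X_{2,N}), Y = (Y_1,…,Y_N), and S be random variables on a common probability space taking values in 𝒳₁^N, 𝒳₂^N, 𝒴^N, and 𝒮 respectively. Then | I(X₁^N → Y^N ‖ X₂^N) − I(X₁^N → Y^N ‖ X₂^N, S) | ≤ H(S), i.e. | ∑_{i=1}^{N} I(X₁^i ; Y_i | Y^{i−1}, X₂^i) − ∑_{i=1}^{N} I(X₁^i ; Y_i | Y^{i−1}, X₂^i, S) | ≤ H(S), where H(S) is the Shannon entropy of S. -/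
open Finset

/-- Probability mass of the event `X = a` under the weight function `μ` on the finite
sample space `Ω`. -/
noncomputable def pmass {Ω α : Type*} [Fintype Ω] [DecidableEq α]
    (μ : Ω → ℝ) (X : Ω → α) (a : α) : ℝ := ∑ ω, if X ω = a then μ ω else 0

/-- Shannon entropy (natural logarithm) of the discrete random variable `X` defined on the
finite probability space `(Ω, μ)`. -/
noncomputable def entropy {Ω α : Type*} [Fintype Ω] [Fintype α] [DecidableEq α]
    (μ : Ω → ℝ) (X : Ω → α) : ℝ := ∑ a, Real.negMulLog (pmass μ X a)

/-- Conditional mutual information `I(X;Y|Z) = H(X,Z) + H(Y,Z) - H(X,Y,Z) - H(Z)`. -/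
noncomputable def condMutualInfo {Ω α β γ : Type*} [Fintype Ω]
    [Fintype α] [DecidableEq α] [Fintype β] [DecidableEq β] [Fintype γ] [DecidableEq γ]
    (μ : Ω → ℝ) (X : Ω → α) (Y : Ω → β) (Z : Ω → γ) : ℝ :=
  entropy μ (fun ω => (X ω, Z ω)) + entropy μ (fun ω => (Y ω, Z ω))
    - entropy μ (fun ω => ((X ω, Y ω), Z ω)) - entropy μ Z

section Basic
variable {Ω : Type*} [Fintype Ω] {μ : Ω → ℝ}

lemma pmass_nonneg {α : Type*} [DecidableEq α] (hμ0 : ∀ ω, 0 ≤ μ ω)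
    (X : Ω → α) (a : α) : 0 ≤ pmass μ X a := by
  refine Finset.sum_nonneg fun ω _ => ?_
  split
  · exact hμ0 ω
  · exact le_refl 0

lemma sum_pmass {α : Type*} [Fintype α] [DecidableEq α] (X : Ω → α) :
    ∑ a, pmass μ X a = ∑ ω, μ ω := by
  unfold pmass
  rw [Finset.sum_comm]
  exact Finset.sum_congr rfl fun ω _ => by simp

/-- marginal over second component of a pair -/
lemma pmass_fst {α β : Type*} [DecidableEq α] [Fintype β] [DecidableEq β]
    (X : Ω → α) (B : Ω → β) (x : α) :
    pmass μ X x = ∑ b, pmass μ (fun ω => (X ω, B ω)) (x, b) := by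
  unfold pmass
  rw [Finset.sum_comm]
  refine Finset.sum_congr rfl fun ω _ => ?_
  simp [Prod.ext_iff, ite_and]

/-- marginal over first component of a pair -/
lemma pmass_snd {α β : Type*} [Fintype α] [DecidableEq α] [DecidableEq β]
    (A : Ω → α) (X : Ω → β) (x : β) :
    pmass μ X x = ∑ a, pmass μ (fun ω => (A ω, X ω)) (a, x) := by
  unfold pmass
  rw [Finset.sum_comm]
  refine Finset.sum_congr rfl fun ω _ => ?_
  simp [Prod.ext_iff, ite_and]

lemma entropy_comp {α β : Type*} [Fintype α] [DecidableEq α] [Fintype β] [DecidableEq β]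
    (X : Ω → α) (e : α → β) (he : Function.Injective e) :
    entropy μ (fun ω => e (X ω)) = entropy μ X := by
  unfold entropy
  have h1 : ∀ b ∈ (univ : Finset β), b ∉ univ.image e →
      Real.negMulLog (pmass μ (fun ω => e (X ω)) b) = 0 := by
    intro b _ hb
    have : pmass μ (fun ω => e (X ω)) b = 0 := by
      refine Finset.sum_eq_zero fun ω _ => ?_
      rw [if_neg]
      exact fun h => hb (Finset.mem_image.2 ⟨X ω, Finset.mem_univ _, h⟩)
    simp [this]
  rw [← Finset.sum_subset (Finset.subset_univ (univ.image e)) h1,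
    Finset.sum_image (fun a _ b _ h => he h)]
  refine Finset.sum_congr rfl fun a _ => ?_
  congr 1
  exact Finset.sum_congr rfl fun ω _ => by simp [he.eq_iff]

lemma negMulLog_sum_le {α : Type*} [Fintype α] (f : α → ℝ) (hf : ∀ a, 0 ≤ f a) :
    Real.negMulLog (∑ a, f a) ≤ ∑ a, Real.negMulLog (f a) := by
  rw [Real.negMulLog, neg_mul, Finset.sum_mul, neg_eq_neg_one_mul, Finset.mul_sum]
  refine Finset.sum_le_sum fun a _ => ?_
  rw [neg_one_mul, ← neg_mul, Real.negMulLog, neg_mul, neg_mul]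
  rcases eq_or_lt_of_le (hf a) with h | h
  · simp [← h]
  · have hle : f a ≤ ∑ a', f a' :=
      Finset.single_le_sum (fun a' _ => hf a') (Finset.mem_univ a)
    have := Real.log_le_log h hle
    nlinarith

end Basic

section Main
variable {Ω : Type*} [Fintype Ω] {μ : Ω → ℝ}

lemma sum_comm3 {α β γ : Type*} [Fintype α] [Fintype β] [Fintype γ] (f : α → β → γ → ℝ) :
    ∑ x, ∑ y, ∑ z, f x y z = ∑ z, ∑ x, ∑ y, f x y z := by
  have h1 : ∀ x : α, (∑ y, ∑ z, f x y z) = ∑ z, ∑ y, f x y z := fun x => Finset.sum_comm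
  simp_rw [h1]
  exact Finset.sum_comm

lemma entropy_le_entropy_pair {α β : Type*} [Fintype α] [DecidableEq α] [Fintype β]
    [DecidableEq β] (hμ0 : ∀ ω, 0 ≤ μ ω) (X : Ω → α) (W : Ω → β) :
    entropy μ W ≤ entropy μ (fun ω => (X ω, W ω)) := by
  unfold entropy
  rw [Fintype.sum_prod_type_right]
  refine Finset.sum_le_sum fun w _ => ?_
  rw [pmass_snd X W w]
  exact negMulLog_sum_le _ fun x => pmass_nonneg hμ0 _ _

lemma condMutualInfo_nonneg {α β γ : Type*} [Fintype α] [DecidableEq α] [Fintype β]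
    [DecidableEq β] [Fintype γ] [DecidableEq γ]
    (hμ0 : ∀ ω, 0 ≤ μ ω) (hμ1 : ∑ ω, μ ω = 1)
    (X : Ω → α) (Y : Ω → β) (Z : Ω → γ) :
    0 ≤ condMutualInfo μ X Y Z := by
  classical
  set p : α → β → γ → ℝ := fun x y z => pmass μ (fun ω => ((X ω, Y ω), Z ω)) ((x, y), z)
    with hpdef
  set a : α → γ → ℝ := fun x z => pmass μ (fun ω => (X ω, Z ω)) (x, z) with hadef
  set b : β → γ → ℝ := fun y z => pmass μ (fun ω => (Y ω, Z ω)) (y, z) with hbdef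
  set c : γ → ℝ := fun z => pmass μ Z z with hcdef
  have hp0 : ∀ x y z, 0 ≤ p x y z := fun x y z => pmass_nonneg hμ0 _ _
  have ha0 : ∀ x z, 0 ≤ a x z := fun x z => pmass_nonneg hμ0 _ _
  have hb0 : ∀ y z, 0 ≤ b y z := fun y z => pmass_nonneg hμ0 _ _
  have hc0 : ∀ z, 0 ≤ c z := fun z => pmass_nonneg hμ0 _ _
  have ha : ∀ x z, a x z = ∑ y, p x y z := by
    intro x z
    simp only [hadef, hpdef]
    unfold pmass
    rw [Finset.sum_comm]
    refine Finset.sum_congr rfl fun ω _ => ?_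
    simp [Prod.ext_iff, ite_and]
  have hb : ∀ y z, b y z = ∑ x, p x y z := by
    intro y z
    simp only [hbdef, hpdef]
    unfold pmass
    rw [Finset.sum_comm]
    refine Finset.sum_congr rfl fun ω _ => ?_
    simp [Prod.ext_iff, ite_and]
  have hc : ∀ z, c z = ∑ x, ∑ y, p x y z := by
    intro z
    simp_rw [← ha]
    exact pmass_snd X Z z
  have hc1 : ∑ z, c z = 1 := by
    simp only [hcdef]
    rw [sum_pmass Z, hμ1]
  -- entropy expansions as triple sums
  have e1 : entropy μ (fun ω => (X ω, Z ω))
      = ∑ x, ∑ y, ∑ z, -(p x y z * Real.log (a x z)) := by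
    unfold entropy
    rw [Fintype.sum_prod_type]
    refine Finset.sum_congr rfl fun x _ => ?_
    have h : ∀ z, Real.negMulLog (a x z) = ∑ y, -(p x y z * Real.log (a x z)) := by
      intro z
      rw [Real.negMulLog, neg_mul, ha x z, Finset.sum_mul, ← Finset.sum_neg_distrib]
    refine (Finset.sum_congr rfl fun z _ => h z).trans ?_
    exact Finset.sum_comm
  have e2 : entropy μ (fun ω => (Y ω, Z ω))
      = ∑ x, ∑ y, ∑ z, -(p x y z * Real.log (b y z)) := by
    unfold entropy
    rw [Fintype.sum_prod_type]
    have h : ∀ y z, Real.negMulLog (b y z) = ∑ x, -(p x y z * Real.log (b y z)) := by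
      intro y z
      rw [Real.negMulLog, neg_mul, hb y z, Finset.sum_mul, ← Finset.sum_neg_distrib]
    refine (Finset.sum_congr rfl fun y _ => Finset.sum_congr rfl fun z _ => h y z).trans ?_
    rw [← sum_comm3 (fun y z x => -(p x y z * Real.log (b y z)))]
  have e3 : entropy μ (fun ω => ((X ω, Y ω), Z ω))
      = ∑ x, ∑ y, ∑ z, -(p x y z * Real.log (p x y z)) := by
    unfold entropy
    rw [Fintype.sum_prod_type, Fintype.sum_prod_type]
    refine Finset.sum_congr rfl fun x _ => Finset.sum_congr rfl fun y _ =>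
      Finset.sum_congr rfl fun z _ => ?_
    rw [Real.negMulLog, neg_mul]
  have e4 : entropy μ Z = ∑ x, ∑ y, ∑ z, -(p x y z * Real.log (c z)) := by
    unfold entropy
    have h : ∀ z, Real.negMulLog (c z) = ∑ x, ∑ y, -(p x y z * Real.log (c z)) := by
      intro z
      rw [Real.negMulLog, neg_mul, hc z, Finset.sum_mul, ← Finset.sum_neg_distrib]
      refine Finset.sum_congr rfl fun x _ => ?_
      rw [Finset.sum_mul, ← Finset.sum_neg_distrib]
    refine (Finset.sum_congr rfl fun z _ => h z).trans ?_
    rw [sum_comm3 (fun x y z => -(p x y z * Real.log (c z)))]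
  have key : condMutualInfo μ X Y Z
      = ∑ x, ∑ y, ∑ z, p x y z *
          (Real.log (p x y z) + Real.log (c z) - Real.log (a x z) - Real.log (b y z)) := by
    rw [condMutualInfo, e1, e2, e3, e4]
    simp only [← Finset.sum_add_distrib, ← Finset.sum_sub_distrib]
    refine Finset.sum_congr rfl fun x _ => Finset.sum_congr rfl fun y _ =>
      Finset.sum_congr rfl fun z _ => by ring
  rw [key]
  -- pointwise lower bound
  have hbound : ∀ x y z, p x y z - a x z * b y z / c z ≤ p x y z *
      (Real.log (p x y z) + Real.log (c z) - Real.log (a x z) - Real.log (b y z)) := by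
    intro x y z
    rcases eq_or_lt_of_le (hp0 x y z) with h | h
    · rw [← h]
      simp only [zero_mul, zero_sub, neg_nonpos]
      exact div_nonneg (mul_nonneg (ha0 x z) (hb0 y z)) (hc0 z)
    · have hpa : p x y z ≤ a x z := by
        rw [ha x z]; exact Finset.single_le_sum (fun y' _ => hp0 x y' z) (Finset.mem_univ y)
      have hpb : p x y z ≤ b y z := by
        rw [hb y z]; exact Finset.single_le_sum (fun x' _ => hp0 x' y z) (Finset.mem_univ x)
      have hpc : p x y z ≤ c z := by
        rw [hc z]
        calc p x y z ≤ ∑ y', p x y' z :=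
              Finset.single_le_sum (fun y' _ => hp0 x y' z) (Finset.mem_univ y)
          _ ≤ ∑ x', ∑ y', p x' y' z :=
              Finset.single_le_sum (fun x' _ => Finset.sum_nonneg fun y' _ => hp0 x' y' z)
                (Finset.mem_univ x)
      have hA : 0 < a x z := lt_of_lt_of_le h hpa
      have hB : 0 < b y z := lt_of_lt_of_le h hpb
      have hC : 0 < c z := lt_of_lt_of_le h hpc
      set q : ℝ := a x z * b y z / c z with hqdef
      have hQ : 0 < q := by positivity
      have hlog : Real.log (q / p x y z) ≤ q / p x y z - 1 :=
        Real.log_le_sub_one_of_pos (by positivity)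
      have hlogq : Real.log (q / p x y z)
          = Real.log (a x z) + Real.log (b y z) - Real.log (c z) - Real.log (p x y z) := by
        rw [Real.log_div (ne_of_gt hQ) (ne_of_gt h), hqdef,
          Real.log_div (by positivity) (ne_of_gt hC), Real.log_mul (ne_of_gt hA) (ne_of_gt hB)]
      have h2 : p x y z * Real.log (q / p x y z) ≤ p x y z * (q / p x y z - 1) :=
        mul_le_mul_of_nonneg_left hlog (le_of_lt h)
      have h3 : p x y z * (q / p x y z - 1) = q - p x y z := by
        field_simp
      have h4 : p x y z *
          (Real.log (p x y z) + Real.log (c z) - Real.log (a x z) - Real.log (b y z))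
          = -(p x y z * Real.log (q / p x y z)) := by
        rw [hlogq]; ring
      rw [h4]
      linarith
  have hsum : ∑ x, ∑ y, ∑ z, (p x y z - a x z * b y z / c z)
      ≤ ∑ x, ∑ y, ∑ z, p x y z *
          (Real.log (p x y z) + Real.log (c z) - Real.log (a x z) - Real.log (b y z)) :=
    Finset.sum_le_sum fun x _ => Finset.sum_le_sum fun y _ => Finset.sum_le_sum fun z _ =>
      hbound x y z
  refine le_trans ?_ hsum
  simp only [Finset.sum_sub_distrib]
  have hP : ∑ x, ∑ y, ∑ z, p x y z = 1 := by
    rw [sum_comm3 p]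
    simp_rw [← hc]
    exact hc1
  have hAz : ∀ z, ∑ x, a x z = c z := fun z => (pmass_snd X Z z).symm
  have hBz : ∀ z, ∑ y, b y z = c z := fun z => (pmass_snd Y Z z).symm
  have hxy : ∀ z, ∑ x, ∑ y, a x z * b y z / c z = if c z = 0 then 0 else c z := by
    intro z
    have hx : ∀ x, ∑ y, a x z * b y z / c z = a x z * (c z / c z) := by
      intro x
      rw [← Finset.sum_div, ← Finset.mul_sum, hBz, mul_div_assoc]
    simp_rw [hx]
    rw [← Finset.sum_mul, hAz]
    by_cases h : c z = 0
    · simp [h]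
    · rw [div_self h, mul_one, if_neg h]
  have hQle : ∑ x, ∑ y, ∑ z, a x z * b y z / c z ≤ 1 := by
    rw [sum_comm3 (fun x y z => a x z * b y z / c z)]
    calc ∑ z, ∑ x, ∑ y, a x z * b y z / c z = ∑ z, if c z = 0 then 0 else c z :=
          Finset.sum_congr rfl fun z _ => hxy z
      _ ≤ ∑ z, c z := Finset.sum_le_sum fun z _ => by
          split
          · exact hc0 z
          · exact le_refl _
      _ = 1 := hc1
  linarith

end Main

noncomputable def cH {Ω α β : Type*} [Fintype Ω] [Fintype α] [DecidableEq α]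
    [Fintype β] [DecidableEq β] (μ : Ω → ℝ) (S : Ω → α) (W : Ω → β) : ℝ :=
  entropy μ (fun ω => (S ω, W ω)) - entropy μ W

section CH
variable {Ω : Type*} [Fintype Ω] {μ : Ω → ℝ}
variable {α β γ : Type*} [Fintype α] [DecidableEq α] [Fintype β] [DecidableEq β]
  [Fintype γ] [DecidableEq γ]

lemma cH_nonneg (hμ0 : ∀ ω, 0 ≤ μ ω) (S : Ω → α) (W : Ω → β) : 0 ≤ cH μ S W :=
  sub_nonneg.2 (entropy_le_entropy_pair hμ0 S W)

lemma entropy_unit (hμ1 : ∑ ω, μ ω = 1) : entropy μ (fun _ : Ω => (() : Unit)) = 0 := by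
  unfold entropy pmass
  simp [hμ1]

lemma cH_le_entropy (hμ0 : ∀ ω, 0 ≤ μ ω) (hμ1 : ∑ ω, μ ω = 1) (S : Ω → α) (W : Ω → β) :
    cH μ S W ≤ entropy μ S := by
  have h := condMutualInfo_nonneg hμ0 hμ1 S W (fun _ => (() : Unit))
  unfold condMutualInfo at h
  rw [entropy_unit hμ1] at h
  have h1 : entropy μ (fun ω => (S ω, ())) = entropy μ S :=
    entropy_comp S (fun s => (s, ())) fun q r h => congrArg Prod.fst h
  have h2 : entropy μ (fun ω => (W ω, ())) = entropy μ W :=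
    entropy_comp W (fun s => (s, ())) fun q r h => congrArg Prod.fst h
  have h3 : entropy μ (fun ω => ((S ω, W ω), ())) = entropy μ (fun ω => (S ω, W ω)) :=
    entropy_comp (fun ω => (S ω, W ω)) (fun s => (s, ())) fun q r h => congrArg Prod.fst h
  unfold cH
  linarith

lemma cH_comp_inj (S : Ω → α) (W : Ω → β) (e : β → γ) (he : Function.Injective e) :
    cH μ S (fun ω => e (W ω)) = cH μ S W := by
  unfold cH
  rw [entropy_comp W e he]
  congr 1
  exact entropy_comp (fun ω => (S ω, W ω)) (Prod.map id e)
    ((Function.injective_id).prodMap he)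

lemma cH_pair_le (hμ0 : ∀ ω, 0 ≤ μ ω) (hμ1 : ∑ ω, μ ω = 1)
    (S : Ω → α) (W : Ω → β) (V : Ω → γ) :
    cH μ S (fun ω => (W ω, V ω)) ≤ cH μ S W := by
  have h := condMutualInfo_nonneg hμ0 hμ1 S V W
  unfold condMutualInfo at h
  have h1 : entropy μ (fun ω => (S ω, (W ω, V ω)))
      = entropy μ (fun ω => ((S ω, V ω), W ω)) := by
    have h' := (entropy_comp (μ := μ) (fun ω => ((S ω, V ω), W ω))
      (fun q => (q.1.1, (q.2, q.1.2))) (by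
        intro q r h
        simp only [Prod.ext_iff] at h ⊢
        tauto))
    simpa using h'
  have h2 : entropy μ (fun ω => (W ω, V ω)) = entropy μ (fun ω => (V ω, W ω)) := by
    have h' := (entropy_comp (μ := μ) (fun ω => (V ω, W ω)) (fun q => (q.2, q.1)) (by
        intro q r h
        simp only [Prod.ext_iff] at h ⊢
        tauto))
    simpa using h'
  unfold cH
  linarith

lemma cH_comp_le (hμ0 : ∀ ω, 0 ≤ μ ω) (hμ1 : ∑ ω, μ ω = 1)
    (S : Ω → α) (W : Ω → β) (g : β → γ) :
    cH μ S W ≤ cH μ S (fun ω => g (W ω)) := by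
  have h0 : cH μ S W = cH μ S (fun ω => (g (W ω), W ω)) :=
    (cH_comp_inj S W (fun w => (g w, w)) fun q r h => congrArg Prod.snd h).symm
  rw [h0]
  exact cH_pair_le hμ0 hμ1 S (fun ω => g (W ω)) W

lemma cmi_diff_eq {σ γ₂ : Type*} [Fintype σ] [DecidableEq σ] [Fintype γ₂] [DecidableEq γ₂]
    (A : Ω → α) (B : Ω → β) (C₁ : Ω → γ) (C₂ : Ω → γ₂) (S : Ω → σ) :
    condMutualInfo μ A B (fun ω => (C₁ ω, C₂ ω)) -
      condMutualInfo μ A B (fun ω => (C₁ ω, C₂ ω, S ω)) =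
    (cH μ S (fun ω => (C₁ ω, C₂ ω)) - cH μ S (fun ω => (B ω, (C₁ ω, C₂ ω))))
      - (cH μ S (fun ω => (A ω, (C₁ ω, C₂ ω)))
          - cH μ S (fun ω => ((A ω, B ω), (C₁ ω, C₂ ω)))) := by
  unfold condMutualInfo cH
  have h1 : entropy μ (fun ω => (A ω, (C₁ ω, C₂ ω, S ω)))
      = entropy μ (fun ω => (S ω, (A ω, (C₁ ω, C₂ ω)))) := by
    have h' := (entropy_comp (μ := μ) (fun ω => (S ω, (A ω, (C₁ ω, C₂ ω))))
      (fun q => (q.2.1, (q.2.2.1, q.2.2.2, q.1))) (by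
        intro q r h
        simp only [Prod.ext_iff] at h ⊢
        tauto))
    simpa using h'
  have h2 : entropy μ (fun ω => (B ω, (C₁ ω, C₂ ω, S ω)))
      = entropy μ (fun ω => (S ω, (B ω, (C₁ ω, C₂ ω)))) := by
    have h' := (entropy_comp (μ := μ) (fun ω => (S ω, (B ω, (C₁ ω, C₂ ω))))
      (fun q => (q.2.1, (q.2.2.1, q.2.2.2, q.1))) (by
        intro q r h
        simp only [Prod.ext_iff] at h ⊢
        tauto))
    simpa using h'
  have h3 : entropy μ (fun ω => ((A ω, B ω), (C₁ ω, C₂ ω, S ω)))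
      = entropy μ (fun ω => (S ω, ((A ω, B ω), (C₁ ω, C₂ ω)))) := by
    have h' := (entropy_comp (μ := μ) (fun ω => (S ω, ((A ω, B ω), (C₁ ω, C₂ ω))))
      (fun q => (q.2.1, (q.2.2.1, q.2.2.2, q.1))) (by
        intro q r h
        simp only [Prod.ext_iff] at h ⊢
        tauto))
    simpa using h'
  have h4 : entropy μ (fun ω => (C₁ ω, C₂ ω, S ω))
      = entropy μ (fun ω => (S ω, (C₁ ω, C₂ ω))) := by
    have h' := (entropy_comp (μ := μ) (fun ω => (S ω, (C₁ ω, C₂ ω)))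
      (fun q => (q.2.1, q.2.2, q.1)) (by
        intro q r h
        simp only [Prod.ext_iff] at h ⊢
        tauto))
    simpa using h'
  linarith

end CH

/-- `|I(X₁^N → Y^N ‖ X₂^N) − I(X₁^N → Y^N ‖ X₂^N, S)| ≤ H(S)`: the directed information
causally conditioned on `X₂^N`, and its variant additionally conditioned on the random
variable `S`, differ by at most the entropy of `S`. -/
theorem abs_directedInfo_sub_directedInfo_state_le_entropy
    {Ω 𝒳₁ 𝒳₂ 𝒴 𝒮 : Type*} [Fintype Ω]
    [Fintype 𝒳₁] [DecidableEq 𝒳₁] [Nonempty 𝒳₁]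
    [Fintype 𝒳₂] [DecidableEq 𝒳₂] [Nonempty 𝒳₂]
    [Fintype 𝒴] [DecidableEq 𝒴] [Nonempty 𝒴]
    [Fintype 𝒮] [DecidableEq 𝒮] [Nonempty 𝒮]
    {N : ℕ} (hN : 1 ≤ N)
    (μ : Ω → ℝ) (hμ0 : ∀ ω, 0 ≤ μ ω) (hμ1 : ∑ ω, μ ω = 1)
    (X₁ : Ω → Fin N → 𝒳₁) (X₂ : Ω → Fin N → 𝒳₂) (Y : Ω → Fin N → 𝒴) (S : Ω → 𝒮) :
    |(∑ i : Fin N, condMutualInfo μ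
        (fun ω => fun j : Fin ((i : ℕ) + 1) => X₁ ω (Fin.castLE i.isLt j))
        (fun ω => Y ω i)
        (fun ω => ((fun j : Fin (i : ℕ) => Y ω (Fin.castLE i.isLt.le j)),
          (fun j : Fin ((i : ℕ) + 1) => X₂ ω (Fin.castLE i.isLt j))))) -
      (∑ i : Fin N, condMutualInfo μ
        (fun ω => fun j : Fin ((i : ℕ) + 1) => X₁ ω (Fin.castLE i.isLt j))
        (fun ω => Y ω i)
        (fun ω => ((fun j : Fin (i : ℕ) => Y ω (Fin.castLE i.isLt.le j)),
          (fun j : Fin ((i : ℕ) + 1) => X₂ ω (Fin.castLE i.isLt j)), S ω)))| ≤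
      entropy μ S := by
    classical
  have hN0 : 0 < N := hN
  -- ℕ-indexed conditional entropies used for telescoping
  let a : ℕ → ℝ := fun k =>
    if hk : k < N then
      cH μ S (fun ω => ((fun j : Fin k => Y ω (Fin.castLE (Nat.le_of_lt hk) j)),
        (fun j : Fin (k + 1) => X₂ ω (Fin.castLE hk j))))
    else 0
  let b : ℕ → ℝ := fun k =>
    if hk : k < N then
      cH μ S (fun ω => ((fun j : Fin (k + 1) => X₁ ω (Fin.castLE hk j)),
        ((fun j : Fin k => Y ω (Fin.castLE (Nat.le_of_lt hk) j)),
          (fun j : Fin (k + 1) => X₂ ω (Fin.castLE hk j)))))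
    else 0
  have haN : a N = 0 := dif_neg (lt_irrefl N)
  have hbN : b N = 0 := dif_neg (lt_irrefl N)
  have ha0 : a 0 ≤ entropy μ S := by
    rw [show a 0 = _ from dif_pos hN0]
    exact cH_le_entropy hμ0 hμ1 S _
  have hb0 : b 0 ≤ entropy μ S := by
    rw [show b 0 = _ from dif_pos hN0]
    exact cH_le_entropy hμ0 hμ1 S _
  -- step bounds for the "P" telescoping sum
  have hkeyP : ∀ i : Fin N, a (↑i + 1) ≤ cH μ S (fun ω => (Y ω i,
      ((fun j : Fin (i : ℕ) => Y ω (Fin.castLE i.isLt.le j)),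
        (fun j : Fin ((i : ℕ) + 1) => X₂ ω (Fin.castLE i.isLt j))))) := by
    intro i
    by_cases hk1 : (i : ℕ) + 1 < N
    · rw [show a (↑i + 1) = _ from dif_pos hk1]
      exact cH_comp_le hμ0 hμ1 S
        (fun ω => ((fun j : Fin ((i : ℕ) + 1) => Y ω (Fin.castLE (Nat.le_of_lt hk1) j)),
          (fun j : Fin ((i : ℕ) + 1 + 1) => X₂ ω (Fin.castLE hk1 j))))
        (fun q => (q.1 (Fin.last _),
          ((fun j : Fin (i : ℕ) => q.1 j.castSucc),
            (fun j : Fin ((i : ℕ) + 1) => q.2 j.castSucc))))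
    · rw [show a (↑i + 1) = 0 from dif_neg hk1]
      exact cH_nonneg hμ0 S _
  have hkeyQ : ∀ i : Fin N, b (↑i + 1) ≤ cH μ S (fun ω =>
      (((fun j : Fin ((i : ℕ) + 1) => X₁ ω (Fin.castLE i.isLt j)), Y ω i),
        ((fun j : Fin (i : ℕ) => Y ω (Fin.castLE i.isLt.le j)),
          (fun j : Fin ((i : ℕ) + 1) => X₂ ω (Fin.castLE i.isLt j))))) := by
    intro i
    by_cases hk1 : (i : ℕ) + 1 < N
    · rw [show b (↑i + 1) = _ from dif_pos hk1]
      exact cH_comp_le hμ0 hμ1 S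
        (fun ω => ((fun j : Fin ((i : ℕ) + 1 + 1) => X₁ ω (Fin.castLE hk1 j)),
          ((fun j : Fin ((i : ℕ) + 1) => Y ω (Fin.castLE (Nat.le_of_lt hk1) j)),
            (fun j : Fin ((i : ℕ) + 1 + 1) => X₂ ω (Fin.castLE hk1 j)))))
        (fun q => (((fun j : Fin ((i : ℕ) + 1) => q.1 j.castSucc), q.2.1 (Fin.last _)),
          ((fun j : Fin (i : ℕ) => q.2.1 j.castSucc),
            (fun j : Fin ((i : ℕ) + 1) => q.2.2 j.castSucc))))
    · rw [show b (↑i + 1) = 0 from dif_neg hk1]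
      exact cH_nonneg hμ0 S _
  -- the two sums of differences
  have hEq : ∀ i : Fin N,
      condMutualInfo μ
        (fun ω => fun j : Fin ((i : ℕ) + 1) => X₁ ω (Fin.castLE i.isLt j))
        (fun ω => Y ω i)
        (fun ω => ((fun j : Fin (i : ℕ) => Y ω (Fin.castLE i.isLt.le j)),
          (fun j : Fin ((i : ℕ) + 1) => X₂ ω (Fin.castLE i.isLt j)))) -
      condMutualInfo μ
        (fun ω => fun j : Fin ((i : ℕ) + 1) => X₁ ω (Fin.castLE i.isLt j))
        (fun ω => Y ω i)
        (fun ω => ((fun j : Fin (i : ℕ) => Y ω (Fin.castLE i.isLt.le j)),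
          (fun j : Fin ((i : ℕ) + 1) => X₂ ω (Fin.castLE i.isLt j)), S ω)) =
      (a ↑i - cH μ S (fun ω => (Y ω i,
        ((fun j : Fin (i : ℕ) => Y ω (Fin.castLE i.isLt.le j)),
          (fun j : Fin ((i : ℕ) + 1) => X₂ ω (Fin.castLE i.isLt j)))))) -
      (b ↑i - cH μ S (fun ω =>
        (((fun j : Fin ((i : ℕ) + 1) => X₁ ω (Fin.castLE i.isLt j)), Y ω i),
          ((fun j : Fin (i : ℕ) => Y ω (Fin.castLE i.isLt.le j)),
            (fun j : Fin ((i : ℕ) + 1) => X₂ ω (Fin.castLE i.isLt j)))))) := by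
    intro i
    rw [show a ↑i = _ from dif_pos i.isLt, show b ↑i = _ from dif_pos i.isLt]
    exact cmi_diff_eq (μ := μ)
      (fun ω => fun j : Fin ((i : ℕ) + 1) => X₁ ω (Fin.castLE i.isLt j))
      (fun ω => Y ω i)
      (fun ω => fun j : Fin (i : ℕ) => Y ω (Fin.castLE i.isLt.le j))
      (fun ω => fun j : Fin ((i : ℕ) + 1) => X₂ ω (Fin.castLE i.isLt j)) S
  -- bounds on the two sums
  have hP0 : 0 ≤ ∑ i : Fin N, (a ↑i - cH μ S (fun ω => (Y ω i,
      ((fun j : Fin (i : ℕ) => Y ω (Fin.castLE i.isLt.le j)),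
        (fun j : Fin ((i : ℕ) + 1) => X₂ ω (Fin.castLE i.isLt j)))))) := by
    refine Finset.sum_nonneg fun i _ => sub_nonneg.2 ?_
    rw [show a ↑i = _ from dif_pos i.isLt]
    exact cH_comp_le hμ0 hμ1 S
      (fun ω => (Y ω i,
        ((fun j : Fin (i : ℕ) => Y ω (Fin.castLE i.isLt.le j)),
          (fun j : Fin ((i : ℕ) + 1) => X₂ ω (Fin.castLE i.isLt j)))))
      Prod.snd
  have hQ0 : 0 ≤ ∑ i : Fin N, (b ↑i - cH μ S (fun ω =>
      (((fun j : Fin ((i : ℕ) + 1) => X₁ ω (Fin.castLE i.isLt j)), Y ω i),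
        ((fun j : Fin (i : ℕ) => Y ω (Fin.castLE i.isLt.le j)),
          (fun j : Fin ((i : ℕ) + 1) => X₂ ω (Fin.castLE i.isLt j)))))) := by
    refine Finset.sum_nonneg fun i _ => sub_nonneg.2 ?_
    rw [show b ↑i = _ from dif_pos i.isLt]
    exact cH_comp_le hμ0 hμ1 S
      (fun ω => (((fun j : Fin ((i : ℕ) + 1) => X₁ ω (Fin.castLE i.isLt j)), Y ω i),
        ((fun j : Fin (i : ℕ) => Y ω (Fin.castLE i.isLt.le j)),
          (fun j : Fin ((i : ℕ) + 1) => X₂ ω (Fin.castLE i.isLt j)))))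
      (fun q => (q.1.1, q.2))
  have hTelA : ∑ i : Fin N, (a ↑i - a (↑i + 1)) = a 0 - a N := by
    rw [Fin.sum_univ_eq_sum_range (fun k => a k - a (k + 1)) N]
    exact Finset.sum_range_sub' a N
  have hTelB : ∑ i : Fin N, (b ↑i - b (↑i + 1)) = b 0 - b N := by
    rw [Fin.sum_univ_eq_sum_range (fun k => b k - b (k + 1)) N]
    exact Finset.sum_range_sub' b N
  have hPle : ∑ i : Fin N, (a ↑i - cH μ S (fun ω => (Y ω i,
      ((fun j : Fin (i : ℕ) => Y ω (Fin.castLE i.isLt.le j)),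
        (fun j : Fin ((i : ℕ) + 1) => X₂ ω (Fin.castLE i.isLt j)))))) ≤ entropy μ S := by
    calc _ ≤ ∑ i : Fin N, (a ↑i - a (↑i + 1)) :=
          Finset.sum_le_sum fun i _ => by have := hkeyP i; linarith
      _ = a 0 - a N := hTelA
      _ ≤ entropy μ S := by rw [haN]; linarith
  have hQle : ∑ i : Fin N, (b ↑i - cH μ S (fun ω =>
      (((fun j : Fin ((i : ℕ) + 1) => X₁ ω (Fin.castLE i.isLt j)), Y ω i),
        ((fun j : Fin (i : ℕ) => Y ω (Fin.castLE i.isLt.le j)),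
          (fun j : Fin ((i : ℕ) + 1) => X₂ ω (Fin.castLE i.isLt j)))))) ≤ entropy μ S := by
    calc _ ≤ ∑ i : Fin N, (b ↑i - b (↑i + 1)) :=
          Finset.sum_le_sum fun i _ => by have := hkeyQ i; linarith
      _ = b 0 - b N := hTelB
      _ ≤ entropy μ S := by rw [hbN]; linarith
  rw [← Finset.sum_sub_distrib]
  rw [Finset.sum_congr rfl fun i _ => hEq i]
  rw [Finset.sum_sub_distrib]
  rw [abs_le]
  constructor <;> linarith
end
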